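/- Suppose P is two-sided and directionally atomless, that b⁺ ≥ (a⁺)² and b⁻ ≥ (a⁻)², and that (ρ'+a⁺, ρ'+a⁻) ≠ (0,0). Then F⁻ is coercive: for every M ∈ ℝ there exists R > 0 such that ‖K‖ ≥ R implies F⁻(K) ≥ M; i.e., F⁻(K) → +∞ as ‖K‖ → +∞ (Euclidean norm). -/

import Mathlib

open MeasureTheory

/-- The function `F⁻` from the paper, written with expectations as Bochner integrals.
Here `K'(E[PP'] − E[P]E[P'])K = E[⟪P,K⟫²] − (E[⟪P,K⟫])²` and `E[P']K = E[⟪P,K⟫]`. -/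
noncomputable def Fminus {Ω : Type*} [MeasurableSpace Ω] (ℙ : Measure Ω) {n : ℕ}
    (P : Ω → EuclideanSpace ℝ (Fin n)) (s ρ' γm ap am bp bm : ℝ)
    (K : EuclideanSpace ℝ (Fin n)) : ℝ :=
  let pk : Ω → ℝ := fun ω => inner ℝ (P ω) K
  let A : ℝ :=
    (∫ ω, ap * (s + pk ω) * (if s + pk ω ≤ 0 then (1:ℝ) else 0) ∂ℙ) +
    (∫ ω, am * (s + pk ω) * (if 0 < s + pk ω then (1:ℝ) else 0) ∂ℙ)
  ρ' ^ 2 * ((∫ ω, (pk ω) ^ 2 ∂ℙ) - (∫ ω, pk ω ∂ℙ) ^ 2) +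
  (∫ ω, (2 * ρ' * ap + bp) * (s + pk ω) ^ 2 * (if s + pk ω ≤ 0 then (1:ℝ) else 0) ∂ℙ) +
  (∫ ω, (2 * ρ' * am + bm) * (s + pk ω) ^ 2 * (if 0 < s + pk ω then (1:ℝ) else 0) ∂ℙ) -
  A ^ 2 - 2 * ρ' * A * (s + ∫ ω, pk ω ∂ℙ) + γm * A +
  ρ' * γm * (s + ∫ ω, pk ω ∂ℙ)


noncomputable def psi (cp cm x : ℝ) : ℝ := if x ≤ 0 then cp * x else cm * x

lemma psi_eq (cp cm x : ℝ) : psi cp cm x = cp * min x 0 + cm * max x 0 := by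
  unfold psi
  rcases le_or_gt x 0 with h | h
  · simp [min_eq_left h, max_eq_right h, if_pos h]
  · simp [min_eq_right h.le, max_eq_left h.le, not_le.mpr h]

lemma psi_cont (cp cm : ℝ) : Continuous (psi cp cm) := by
  have : psi cp cm = fun x => cp * min x 0 + cm * max x 0 := funext (psi_eq cp cm)
  rw [this]; continuity

lemma abs_psi_le (cp cm x : ℝ) : |psi cp cm x| ≤ (|cp| + |cm|) * |x| := by
  unfold psi
  split
  · rw [abs_mul]; nlinarith [abs_nonneg cm, abs_nonneg x, abs_nonneg cp]
  · rw [abs_mul]; nlinarith [abs_nonneg cm, abs_nonneg x, abs_nonneg cp]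

lemma psi_smul (cp cm : ℝ) {t : ℝ} (h : 0 ≤ t) (x : ℝ) :
    psi cp cm (t * x) = t * psi cp cm x := by
  rcases le_or_gt x 0 with hx | hx
  · have htx : t * x ≤ 0 := mul_nonpos_iff.mpr (Or.inl ⟨h, hx⟩)
    simp only [psi, if_pos htx, if_pos hx]; ring
  · rcases eq_or_lt_of_le h with rfl | ht
    · simp [psi]
    · have htx : 0 < t * x := mul_pos ht hx
      simp only [psi, if_neg (not_le.mpr htx), if_neg (not_le.mpr hx)]; ring

lemma var_eq {Ω : Type*} [MeasurableSpace Ω] (ℙ : Measure Ω) [IsProbabilityMeasure ℙ]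
    (f : Ω → ℝ) (hf : Integrable f ℙ) (hf2 : Integrable (fun ω => f ω ^ 2) ℙ) :
    ∫ ω, (f ω - ∫ ω, f ω ∂ℙ) ^ 2 ∂ℙ = (∫ ω, f ω ^ 2 ∂ℙ) - (∫ ω, f ω ∂ℙ) ^ 2 := by
  set m := ∫ ω, f ω ∂ℙ with hm
  have h1 : ∀ ω, (f ω - m) ^ 2 = (f ω ^ 2 - (2 * m) * f ω) + m ^ 2 := fun ω => by ring
  simp only [h1]
  have hint : Integrable (fun ω => f ω ^ 2 - 2 * m * f ω) ℙ := hf2.sub (hf.const_mul _)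
  have e1 : ∫ ω, (f ω ^ 2 - 2 * m * f ω + m ^ 2) ∂ℙ
      = (∫ ω, (f ω ^ 2 - 2 * m * f ω) ∂ℙ) + ∫ _ω, (m ^ 2 : ℝ) ∂ℙ :=
    integral_add hint (integrable_const _)
  have e2 : ∫ ω, (f ω ^ 2 - 2 * m * f ω) ∂ℙ
      = (∫ ω, f ω ^ 2 ∂ℙ) - ∫ ω, 2 * m * f ω ∂ℙ := integral_sub hf2 (hf.const_mul _)
  have e3 : ∫ ω, 2 * m * f ω ∂ℙ = 2 * m * ∫ ω, f ω ∂ℙ := integral_const_mul _ _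
  rw [e1, e2, e3, integral_const]
  simp [measure_univ]
  ring

lemma integrable_dom {Ω : Type*} [MeasurableSpace Ω] {ℙ : Measure Ω} [IsProbabilityMeasure ℙ]
    {n : ℕ} {P : Ω → EuclideanSpace ℝ (Fin n)} (hmeas : Measurable P)
    (hL2 : Integrable (fun ω => ‖P ω‖ ^ 2) ℙ) :
    Integrable (fun ω => (1 + ‖P ω‖) ^ 2) ℙ := by
  have hP1 : Integrable (fun ω => ‖P ω‖) ℙ := by
    refine ((integrable_const (1:ℝ)).add hL2).mono' hmeas.norm.aestronglyMeasurable ?_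
    refine ae_of_all _ fun ω => ?_
    have h0 := norm_nonneg (P ω)
    rw [Real.norm_eq_abs, abs_of_nonneg h0]
    show ‖P ω‖ ≤ 1 + ‖P ω‖ ^ 2
    nlinarith
  have h : Integrable (fun ω => 1 + 2 * ‖P ω‖ + ‖P ω‖ ^ 2) ℙ :=
    ((integrable_const (1:ℝ)).add (hP1.const_mul 2)).add hL2
  exact h.congr (ae_of_all _ fun ω => by ring)

lemma integrable_norm_P {Ω : Type*} [MeasurableSpace Ω] {ℙ : Measure Ω} [IsProbabilityMeasure ℙ]
    {n : ℕ} {P : Ω → EuclideanSpace ℝ (Fin n)} (hmeas : Measurable P)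
    (hL2 : Integrable (fun ω => ‖P ω‖ ^ 2) ℙ) :
    Integrable (fun ω => ‖P ω‖) ℙ := by
  refine ((integrable_const (1:ℝ)).add hL2).mono' hmeas.norm.aestronglyMeasurable ?_
  refine ae_of_all _ fun ω => ?_
  have h0 := norm_nonneg (P ω)
  rw [Real.norm_eq_abs, abs_of_nonneg h0]
  show ‖P ω‖ ≤ 1 + ‖P ω‖ ^ 2
  nlinarith

lemma integrable_of_le_dom {Ω : Type*} [MeasurableSpace Ω] {ℙ : Measure Ω}
    {n : ℕ} {P : Ω → EuclideanSpace ℝ (Fin n)}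
    (hdom : Integrable (fun ω => (1 + ‖P ω‖) ^ 2) ℙ) {f : Ω → ℝ}
    (hf : AEStronglyMeasurable f ℙ) (c : ℝ) (h : ∀ ω, |f ω| ≤ c * (1 + ‖P ω‖) ^ 2) :
    Integrable f ℙ :=
  (hdom.const_mul c).mono' hf (ae_of_all _ fun ω => by
    simpa [Real.norm_eq_abs] using h ω)

lemma Fminus_key {Ω : Type*} [MeasurableSpace Ω] (ℙ : Measure Ω) [IsProbabilityMeasure ℙ]
    {n : ℕ} (P : Ω → EuclideanSpace ℝ (Fin n)) (hmeas : Measurable P)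
    (hL2 : Integrable (fun ω => ‖P ω‖ ^ 2) ℙ)
    (s ρ' γm ap am bp bm : ℝ) (K : EuclideanSpace ℝ (Fin n)) :
    Fminus ℙ P s ρ' γm ap am bp bm K =
      ((∫ ω, psi (ρ' + ap) (ρ' + am) (s + (inner ℝ (P ω) K : ℝ)) ^ 2 ∂ℙ)
        - (∫ ω, psi (ρ' + ap) (ρ' + am) (s + (inner ℝ (P ω) K : ℝ)) ∂ℙ) ^ 2
        + γm * ∫ ω, psi (ρ' + ap) (ρ' + am) (s + (inner ℝ (P ω) K : ℝ)) ∂ℙ)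
      + (bp - ap ^ 2) *
        (∫ ω, (s + (inner ℝ (P ω) K : ℝ)) ^ 2 * (if s + (inner ℝ (P ω) K : ℝ) ≤ 0 then (1:ℝ) else 0) ∂ℙ)
      + (bm - am ^ 2) *
        (∫ ω, (s + (inner ℝ (P ω) K : ℝ)) ^ 2 * (if 0 < s + (inner ℝ (P ω) K : ℝ) then (1:ℝ) else 0) ∂ℙ) := by
  have hdom := integrable_dom hmeas hL2
  have mpk : Measurable fun ω => (inner ℝ (P ω) K : ℝ) := by
    have hc : Continuous fun x : EuclideanSpace ℝ (Fin n) => (inner ℝ x K : ℝ) :=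
      continuous_id.inner continuous_const
    exact hc.measurable.comp hmeas
  have mX : Measurable fun ω => s + (inner ℝ (P ω) K : ℝ) := measurable_const.add mpk
  have mindp : Measurable fun ω => (if s + (inner ℝ (P ω) K : ℝ) ≤ 0 then (1:ℝ) else 0) :=
    Measurable.ite (measurableSet_le mX measurable_const) measurable_const measurable_const
  have mindm : Measurable fun ω => (if 0 < s + (inner ℝ (P ω) K : ℝ) then (1:ℝ) else 0) :=
    Measurable.ite (measurableSet_lt measurable_const mX) measurable_const measurable_const
  have habs : ∀ ω, |(inner ℝ (P ω) K : ℝ)| ≤ ‖P ω‖ * ‖K‖ := fun ω => abs_real_inner_le_norm _ _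
  have hXb : ∀ ω, |s + (inner ℝ (P ω) K : ℝ)| ≤ (|s| + ‖K‖) * (1 + ‖P ω‖) := by
    intro ω
    have h1 := habs ω
    have h2 := abs_add_le s (inner ℝ (P ω) K : ℝ)
    have h3 := norm_nonneg (P ω)
    have h4 := norm_nonneg K
    have h5 := abs_nonneg s
    nlinarith [mul_nonneg h5 h3, mul_nonneg h4 h3]
  have hX2b : ∀ ω, (s + (inner ℝ (P ω) K : ℝ)) ^ 2 ≤ (|s| + ‖K‖) ^ 2 * (1 + ‖P ω‖) ^ 2 := by
    intro ω
    have h1 := hXb ω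
    have h2 := abs_nonneg (s + (inner ℝ (P ω) K : ℝ))
    nlinarith [sq_abs (s + (inner ℝ (P ω) K : ℝ))]
  have hind1 : ∀ ω, |(if s + (inner ℝ (P ω) K : ℝ) ≤ 0 then (1:ℝ) else 0)| ≤ 1 := by
    intro ω; split <;> simp
  have hind2 : ∀ ω, |(if 0 < s + (inner ℝ (P ω) K : ℝ) then (1:ℝ) else 0)| ≤ 1 := by
    intro ω; split <;> simp
  have hge1 : ∀ ω, (1:ℝ) ≤ (1 + ‖P ω‖) ^ 2 := by
    intro ω; nlinarith [norm_nonneg (P ω)]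
  have i_pk : Integrable (fun ω => (inner ℝ (P ω) K : ℝ)) ℙ := by
    refine integrable_of_le_dom hdom mpk.aestronglyMeasurable ‖K‖ fun ω => ?_
    have := habs ω; have h3 := norm_nonneg (P ω); have h4 := norm_nonneg K
    nlinarith [mul_nonneg h4 h3, mul_nonneg (mul_nonneg h4 h3) h3]
  have i_X : Integrable (fun ω => s + (inner ℝ (P ω) K : ℝ)) ℙ := (integrable_const s).add i_pk
  have i_Xip : Integrable (fun ω =>
      (s + (inner ℝ (P ω) K : ℝ)) * (if s + (inner ℝ (P ω) K : ℝ) ≤ 0 then (1:ℝ) else 0)) ℙ := by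
    refine integrable_of_le_dom hdom (mX.mul mindp).aestronglyMeasurable (|s| + ‖K‖) fun ω => ?_
    rw [abs_mul]
    have h1 := hXb ω; have h2 := hind1 ω; have h3 := hge1 ω
    have h4 := abs_nonneg (s + (inner ℝ (P ω) K : ℝ))
    have h5 := abs_nonneg (if s + (inner ℝ (P ω) K : ℝ) ≤ 0 then (1:ℝ) else 0)
    have h6 : (0:ℝ) ≤ |s| + ‖K‖ := by positivity
    have h7 := norm_nonneg (P ω)
    nlinarith
  have i_Xim : Integrable (fun ω =>
      (s + (inner ℝ (P ω) K : ℝ)) * (if 0 < s + (inner ℝ (P ω) K : ℝ) then (1:ℝ) else 0)) ℙ := by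
    refine integrable_of_le_dom hdom (mX.mul mindm).aestronglyMeasurable (|s| + ‖K‖) fun ω => ?_
    rw [abs_mul]
    have h1 := hXb ω; have h2 := hind2 ω; have h3 := hge1 ω
    have h4 := abs_nonneg (s + (inner ℝ (P ω) K : ℝ))
    have h5 := abs_nonneg (if 0 < s + (inner ℝ (P ω) K : ℝ) then (1:ℝ) else 0)
    have h6 : (0:ℝ) ≤ |s| + ‖K‖ := by positivity
    have h7 := norm_nonneg (P ω)
    nlinarith
  have i_X2ip : Integrable (fun ω =>
      (s + (inner ℝ (P ω) K : ℝ)) ^ 2 * (if s + (inner ℝ (P ω) K : ℝ) ≤ 0 then (1:ℝ) else 0)) ℙ := by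
    refine integrable_of_le_dom hdom ((mX.pow_const 2).mul mindp).aestronglyMeasurable
      ((|s| + ‖K‖) ^ 2) fun ω => ?_
    rw [abs_mul, abs_of_nonneg (sq_nonneg (s + (inner ℝ (P ω) K : ℝ)))]
    have h1 := hX2b ω; have h2 := hind1 ω
    have h4 := sq_nonneg (s + (inner ℝ (P ω) K : ℝ))
    have h5 := abs_nonneg (if s + (inner ℝ (P ω) K : ℝ) ≤ 0 then (1:ℝ) else 0)
    nlinarith
  have i_X2im : Integrable (fun ω =>
      (s + (inner ℝ (P ω) K : ℝ)) ^ 2 * (if 0 < s + (inner ℝ (P ω) K : ℝ) then (1:ℝ) else 0)) ℙ := by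
    refine integrable_of_le_dom hdom ((mX.pow_const 2).mul mindm).aestronglyMeasurable
      ((|s| + ‖K‖) ^ 2) fun ω => ?_
    rw [abs_mul, abs_of_nonneg (sq_nonneg (s + (inner ℝ (P ω) K : ℝ)))]
    have h1 := hX2b ω; have h2 := hind2 ω
    have h4 := sq_nonneg (s + (inner ℝ (P ω) K : ℝ))
    have h5 := abs_nonneg (if 0 < s + (inner ℝ (P ω) K : ℝ) then (1:ℝ) else 0)
    nlinarith
  -- pointwise decompositions of psi
  have hptw : ∀ ω, psi (ρ' + ap) (ρ' + am) (s + (inner ℝ (P ω) K : ℝ)) =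
      ρ' * (s + (inner ℝ (P ω) K : ℝ)) +
      (ap * ((s + (inner ℝ (P ω) K : ℝ)) * (if s + (inner ℝ (P ω) K : ℝ) ≤ 0 then (1:ℝ) else 0)) +
       am * ((s + (inner ℝ (P ω) K : ℝ)) * (if 0 < s + (inner ℝ (P ω) K : ℝ) then (1:ℝ) else 0))) := by
    intro ω
    by_cases h : s + (inner ℝ (P ω) K : ℝ) ≤ 0
    · simp only [psi, if_pos h, if_neg (not_lt.mpr h)]; ring
    · simp only [psi, if_neg h, if_pos (not_le.mp h)]; ring
  have hptw2 : ∀ ω, psi (ρ' + ap) (ρ' + am) (s + (inner ℝ (P ω) K : ℝ)) ^ 2 =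
      (ρ' + ap) ^ 2 * ((s + (inner ℝ (P ω) K : ℝ)) ^ 2 * (if s + (inner ℝ (P ω) K : ℝ) ≤ 0 then (1:ℝ) else 0)) +
      (ρ' + am) ^ 2 * ((s + (inner ℝ (P ω) K : ℝ)) ^ 2 * (if 0 < s + (inner ℝ (P ω) K : ℝ) then (1:ℝ) else 0)) := by
    intro ω
    by_cases h : s + (inner ℝ (P ω) K : ℝ) ≤ 0
    · simp only [psi, if_pos h, if_neg (not_lt.mpr h)]; ring
    · simp only [psi, if_neg h, if_pos (not_le.mp h)]; ring
  -- rewrite integrals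
  have eY : (∫ ω, psi (ρ' + ap) (ρ' + am) (s + (inner ℝ (P ω) K : ℝ)) ∂ℙ) =
      ρ' * (s + ∫ ω, (inner ℝ (P ω) K : ℝ) ∂ℙ) +
      (ap * (∫ ω, (s + (inner ℝ (P ω) K : ℝ)) * (if s + (inner ℝ (P ω) K : ℝ) ≤ 0 then (1:ℝ) else 0) ∂ℙ) +
       am * (∫ ω, (s + (inner ℝ (P ω) K : ℝ)) * (if 0 < s + (inner ℝ (P ω) K : ℝ) then (1:ℝ) else 0) ∂ℙ)) := by
    have i1 : Integrable (fun ω => ρ' * (s + (inner ℝ (P ω) K : ℝ))) ℙ := i_X.const_mul ρ'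
    have i2 : Integrable (fun ω => ap * ((s + (inner ℝ (P ω) K : ℝ)) *
        (if s + (inner ℝ (P ω) K : ℝ) ≤ 0 then (1:ℝ) else 0))) ℙ := i_Xip.const_mul ap
    have i3 : Integrable (fun ω => am * ((s + (inner ℝ (P ω) K : ℝ)) *
        (if 0 < s + (inner ℝ (P ω) K : ℝ) then (1:ℝ) else 0))) ℙ := i_Xim.const_mul am
    have i23 : Integrable (fun ω => ap * ((s + (inner ℝ (P ω) K : ℝ)) *
        (if s + (inner ℝ (P ω) K : ℝ) ≤ 0 then (1:ℝ) else 0)) + am * ((s + (inner ℝ (P ω) K : ℝ)) *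
        (if 0 < s + (inner ℝ (P ω) K : ℝ) then (1:ℝ) else 0))) ℙ := i2.add i3
    have a1 : (∫ ω, (ρ' * (s + (inner ℝ (P ω) K : ℝ)) +
        (ap * ((s + (inner ℝ (P ω) K : ℝ)) * (if s + (inner ℝ (P ω) K : ℝ) ≤ 0 then (1:ℝ) else 0)) +
         am * ((s + (inner ℝ (P ω) K : ℝ)) * (if 0 < s + (inner ℝ (P ω) K : ℝ) then (1:ℝ) else 0)))) ∂ℙ) =
        (∫ ω, ρ' * (s + (inner ℝ (P ω) K : ℝ)) ∂ℙ) +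
        ∫ ω, (ap * ((s + (inner ℝ (P ω) K : ℝ)) * (if s + (inner ℝ (P ω) K : ℝ) ≤ 0 then (1:ℝ) else 0)) +
         am * ((s + (inner ℝ (P ω) K : ℝ)) * (if 0 < s + (inner ℝ (P ω) K : ℝ) then (1:ℝ) else 0))) ∂ℙ :=
      integral_add i1 i23
    have a2 : (∫ ω, (ap * ((s + (inner ℝ (P ω) K : ℝ)) * (if s + (inner ℝ (P ω) K : ℝ) ≤ 0 then (1:ℝ) else 0)) +
         am * ((s + (inner ℝ (P ω) K : ℝ)) * (if 0 < s + (inner ℝ (P ω) K : ℝ) then (1:ℝ) else 0))) ∂ℙ) =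
        (∫ ω, ap * ((s + (inner ℝ (P ω) K : ℝ)) * (if s + (inner ℝ (P ω) K : ℝ) ≤ 0 then (1:ℝ) else 0)) ∂ℙ) +
        ∫ ω, am * ((s + (inner ℝ (P ω) K : ℝ)) * (if 0 < s + (inner ℝ (P ω) K : ℝ) then (1:ℝ) else 0)) ∂ℙ :=
      integral_add i2 i3
    have a3 : (∫ ω, (s + (inner ℝ (P ω) K : ℝ)) ∂ℙ) = s + ∫ ω, (inner ℝ (P ω) K : ℝ) ∂ℙ := by
      rw [integral_add (integrable_const s) i_pk, integral_const]
      simp [measure_univ]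
    rw [integral_congr_ae (ae_of_all _ hptw), a1, a2,
      integral_const_mul, integral_const_mul, integral_const_mul, a3]
  have eY2 : (∫ ω, psi (ρ' + ap) (ρ' + am) (s + (inner ℝ (P ω) K : ℝ)) ^ 2 ∂ℙ) =
      (ρ' + ap) ^ 2 * (∫ ω, (s + (inner ℝ (P ω) K : ℝ)) ^ 2 * (if s + (inner ℝ (P ω) K : ℝ) ≤ 0 then (1:ℝ) else 0) ∂ℙ) +
      (ρ' + am) ^ 2 * (∫ ω, (s + (inner ℝ (P ω) K : ℝ)) ^ 2 * (if 0 < s + (inner ℝ (P ω) K : ℝ) then (1:ℝ) else 0) ∂ℙ) := by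
    have i4 : Integrable (fun ω => (ρ' + ap) ^ 2 * ((s + (inner ℝ (P ω) K : ℝ)) ^ 2 *
        (if s + (inner ℝ (P ω) K : ℝ) ≤ 0 then (1:ℝ) else 0))) ℙ := i_X2ip.const_mul _
    have i5 : Integrable (fun ω => (ρ' + am) ^ 2 * ((s + (inner ℝ (P ω) K : ℝ)) ^ 2 *
        (if 0 < s + (inner ℝ (P ω) K : ℝ) then (1:ℝ) else 0))) ℙ := i_X2im.const_mul _
    have a4 : (∫ ω, ((ρ' + ap) ^ 2 * ((s + (inner ℝ (P ω) K : ℝ)) ^ 2 *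
        (if s + (inner ℝ (P ω) K : ℝ) ≤ 0 then (1:ℝ) else 0)) + (ρ' + am) ^ 2 * ((s + (inner ℝ (P ω) K : ℝ)) ^ 2 *
        (if 0 < s + (inner ℝ (P ω) K : ℝ) then (1:ℝ) else 0))) ∂ℙ) =
        (∫ ω, (ρ' + ap) ^ 2 * ((s + (inner ℝ (P ω) K : ℝ)) ^ 2 *
        (if s + (inner ℝ (P ω) K : ℝ) ≤ 0 then (1:ℝ) else 0)) ∂ℙ) +
        ∫ ω, (ρ' + am) ^ 2 * ((s + (inner ℝ (P ω) K : ℝ)) ^ 2 *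
        (if 0 < s + (inner ℝ (P ω) K : ℝ) then (1:ℝ) else 0)) ∂ℙ := integral_add i4 i5
    rw [integral_congr_ae (ae_of_all _ hptw2), a4, integral_const_mul, integral_const_mul]
  have e3 : (∫ ω, (2 * ρ' * ap + bp) * (s + (inner ℝ (P ω) K : ℝ)) ^ 2 *
      (if s + (inner ℝ (P ω) K : ℝ) ≤ 0 then (1:ℝ) else 0) ∂ℙ) =
      (2 * ρ' * ap + bp) * ∫ ω, (s + (inner ℝ (P ω) K : ℝ)) ^ 2 *
      (if s + (inner ℝ (P ω) K : ℝ) ≤ 0 then (1:ℝ) else 0) ∂ℙ := by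
    rw [← integral_const_mul]
    exact integral_congr_ae (ae_of_all _ fun ω => by ring)
  have e4 : (∫ ω, (2 * ρ' * am + bm) * (s + (inner ℝ (P ω) K : ℝ)) ^ 2 *
      (if 0 < s + (inner ℝ (P ω) K : ℝ) then (1:ℝ) else 0) ∂ℙ) =
      (2 * ρ' * am + bm) * ∫ ω, (s + (inner ℝ (P ω) K : ℝ)) ^ 2 *
      (if 0 < s + (inner ℝ (P ω) K : ℝ) then (1:ℝ) else 0) ∂ℙ := by
    rw [← integral_const_mul]
    exact integral_congr_ae (ae_of_all _ fun ω => by ring)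
  have e5 : (∫ ω, ap * (s + (inner ℝ (P ω) K : ℝ)) *
      (if s + (inner ℝ (P ω) K : ℝ) ≤ 0 then (1:ℝ) else 0) ∂ℙ) =
      ap * ∫ ω, (s + (inner ℝ (P ω) K : ℝ)) *
      (if s + (inner ℝ (P ω) K : ℝ) ≤ 0 then (1:ℝ) else 0) ∂ℙ := by
    rw [← integral_const_mul]
    exact integral_congr_ae (ae_of_all _ fun ω => by ring)
  have e6 : (∫ ω, am * (s + (inner ℝ (P ω) K : ℝ)) *
      (if 0 < s + (inner ℝ (P ω) K : ℝ) then (1:ℝ) else 0) ∂ℙ) =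
      am * ∫ ω, (s + (inner ℝ (P ω) K : ℝ)) *
      (if 0 < s + (inner ℝ (P ω) K : ℝ) then (1:ℝ) else 0) ∂ℙ := by
    rw [← integral_const_mul]
    exact integral_congr_ae (ae_of_all _ fun ω => by ring)
  have i_pk2 : Integrable (fun ω => (inner ℝ (P ω) K : ℝ) ^ 2) ℙ := by
    refine integrable_of_le_dom hdom (mpk.pow_const 2).aestronglyMeasurable (‖K‖ ^ 2) fun ω => ?_
    have h1 := habs ω; have h3 := norm_nonneg (P ω); have h4 := norm_nonneg K
    have h2 := abs_nonneg ((inner ℝ (P ω) K : ℝ))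
    rw [abs_of_nonneg (sq_nonneg ((inner ℝ (P ω) K : ℝ)))]
    nlinarith [sq_abs ((inner ℝ (P ω) K : ℝ)), mul_nonneg (mul_nonneg h4 h4) h3,
      mul_nonneg (mul_nonneg (mul_nonneg h4 h4) h3) h3]
  have esum : (∫ ω, (s + (inner ℝ (P ω) K : ℝ)) ^ 2 * (if s + (inner ℝ (P ω) K : ℝ) ≤ 0 then (1:ℝ) else 0) ∂ℙ)
      + (∫ ω, (s + (inner ℝ (P ω) K : ℝ)) ^ 2 * (if 0 < s + (inner ℝ (P ω) K : ℝ) then (1:ℝ) else 0) ∂ℙ)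
      = s ^ 2 + 2 * s * (∫ ω, (inner ℝ (P ω) K : ℝ) ∂ℙ) + ∫ ω, (inner ℝ (P ω) K : ℝ) ^ 2 ∂ℙ := by
    have b1 : (∫ ω, ((s + (inner ℝ (P ω) K : ℝ)) ^ 2 * (if s + (inner ℝ (P ω) K : ℝ) ≤ 0 then (1:ℝ) else 0)
        + (s + (inner ℝ (P ω) K : ℝ)) ^ 2 * (if 0 < s + (inner ℝ (P ω) K : ℝ) then (1:ℝ) else 0)) ∂ℙ)
        = (∫ ω, (s + (inner ℝ (P ω) K : ℝ)) ^ 2 * (if s + (inner ℝ (P ω) K : ℝ) ≤ 0 then (1:ℝ) else 0) ∂ℙ)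
        + (∫ ω, (s + (inner ℝ (P ω) K : ℝ)) ^ 2 * (if 0 < s + (inner ℝ (P ω) K : ℝ) then (1:ℝ) else 0) ∂ℙ) :=
      integral_add i_X2ip i_X2im
    have i_lin : Integrable (fun ω => s ^ 2 + 2 * s * (inner ℝ (P ω) K : ℝ)) ℙ :=
      (integrable_const _).add (i_pk.const_mul _)
    have b3 : (∫ ω, ((s ^ 2 + 2 * s * (inner ℝ (P ω) K : ℝ)) + (inner ℝ (P ω) K : ℝ) ^ 2) ∂ℙ)
        = (∫ ω, (s ^ 2 + 2 * s * (inner ℝ (P ω) K : ℝ)) ∂ℙ) + ∫ ω, (inner ℝ (P ω) K : ℝ) ^ 2 ∂ℙ :=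
      integral_add i_lin i_pk2
    have b4 : (∫ ω, (s ^ 2 + 2 * s * (inner ℝ (P ω) K : ℝ)) ∂ℙ)
        = s ^ 2 + 2 * s * ∫ ω, (inner ℝ (P ω) K : ℝ) ∂ℙ := by
      rw [integral_add (integrable_const _) (i_pk.const_mul _), integral_const_mul, integral_const]
      simp [measure_univ]
    have b2 : (∫ ω, ((s + (inner ℝ (P ω) K : ℝ)) ^ 2 * (if s + (inner ℝ (P ω) K : ℝ) ≤ 0 then (1:ℝ) else 0)
        + (s + (inner ℝ (P ω) K : ℝ)) ^ 2 * (if 0 < s + (inner ℝ (P ω) K : ℝ) then (1:ℝ) else 0)) ∂ℙ)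
        = ∫ ω, ((s ^ 2 + 2 * s * (inner ℝ (P ω) K : ℝ)) + (inner ℝ (P ω) K : ℝ) ^ 2) ∂ℙ := by
      refine integral_congr_ae (ae_of_all _ fun ω => ?_)
      by_cases h : s + (inner ℝ (P ω) K : ℝ) ≤ 0
      · simp only [if_pos h, if_neg (not_lt.mpr h)]; ring
      · simp only [if_neg h, if_pos (not_le.mp h)]; ring
    rw [← b1, b2, b3, b4]
  unfold Fminus
  dsimp only
  rw [eY, eY2, e3, e4, e5, e6]
  linear_combination (-(ρ' ^ 2)) * esum

lemma psi_diff_le (cp cm : ℝ) {s : ℝ} (hs : 0 ≤ s) (x : ℝ) :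
    |psi cp cm x - psi cp cm (s + x)| ≤ (|cp| + |cm|) * s := by
  rw [psi_eq, psi_eq]
  have h1 : |min x 0 - min (s + x) 0| ≤ s := by
    refine le_trans (abs_min_sub_min_le_max x 0 (s + x) 0) ?_
    have : |x - (s + x)| = s := by
      rw [show x - (s + x) = -s by ring, abs_neg, abs_of_nonneg hs]
    rw [this]
    simpa using hs
  have h2 : |max x 0 - max (s + x) 0| ≤ s := by
    refine le_trans (abs_max_sub_max_le_abs x (s + x) 0) ?_
    rw [show x - (s + x) = -s by ring, abs_neg, abs_of_nonneg hs]
  have h3 : cp * min x 0 + cm * max x 0 - (cp * min (s + x) 0 + cm * max (s + x) 0)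
      = cp * (min x 0 - min (s + x) 0) + cm * (max x 0 - max (s + x) 0) := by ring
  rw [h3]
  calc |cp * (min x 0 - min (s + x) 0) + cm * (max x 0 - max (s + x) 0)|
      ≤ |cp * (min x 0 - min (s + x) 0)| + |cm * (max x 0 - max (s + x) 0)| := abs_add_le _ _
    _ = |cp| * |min x 0 - min (s + x) 0| + |cm| * |max x 0 - max (s + x) 0| := by
        rw [abs_mul, abs_mul]
    _ ≤ (|cp| + |cm|) * s := by
        have := abs_nonneg cp; have := abs_nonneg cm
        have := abs_nonneg (min x 0 - min (s + x) 0)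
        have := abs_nonneg (max x 0 - max (s + x) 0)
        nlinarith

lemma integrable_sub_sq {Ω : Type*} [MeasurableSpace Ω] {ℙ : Measure Ω} [IsProbabilityMeasure ℙ]
    {f : Ω → ℝ} (hf : Integrable f ℙ) (hf2 : Integrable (fun ω => f ω ^ 2) ℙ) (c : ℝ) :
    Integrable (fun ω => (f ω - c) ^ 2) ℙ := by
  have h : (fun ω => (f ω - c) ^ 2) = fun ω => (f ω ^ 2 - (2 * c) * f ω) + c ^ 2 :=
    funext fun ω => by ring
  rw [h]
  exact (hf2.sub (hf.const_mul _)).add (integrable_const _)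

lemma integrable_psi_pack {Ω : Type*} [MeasurableSpace Ω] {ℙ : Measure Ω} [IsProbabilityMeasure ℙ]
    {n : ℕ} {P : Ω → EuclideanSpace ℝ (Fin n)} (hmeas : Measurable P)
    (hL2 : Integrable (fun ω => ‖P ω‖ ^ 2) ℙ) (cp cm c₀ : ℝ) (K : EuclideanSpace ℝ (Fin n)) :
    Integrable (fun ω => psi cp cm (c₀ + (inner ℝ (P ω) K : ℝ))) ℙ ∧
    Integrable (fun ω => psi cp cm (c₀ + (inner ℝ (P ω) K : ℝ)) ^ 2) ℙ := by
  have hdom := integrable_dom hmeas hL2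
  have mpk : Measurable fun ω => (inner ℝ (P ω) K : ℝ) := by
    have hc : Continuous fun x : EuclideanSpace ℝ (Fin n) => (inner ℝ x K : ℝ) :=
      continuous_id.inner continuous_const
    exact hc.measurable.comp hmeas
  have mY : Measurable fun ω => psi cp cm (c₀ + (inner ℝ (P ω) K : ℝ)) :=
    (psi_cont cp cm).measurable.comp (measurable_const.add mpk)
  have habs : ∀ ω, |(inner ℝ (P ω) K : ℝ)| ≤ ‖P ω‖ * ‖K‖ := fun ω => abs_real_inner_le_norm _ _
  have hXb : ∀ ω, |c₀ + (inner ℝ (P ω) K : ℝ)| ≤ (|c₀| + ‖K‖) * (1 + ‖P ω‖) := by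
    intro ω
    have h1 := habs ω
    have h2 := abs_add_le c₀ (inner ℝ (P ω) K : ℝ)
    have h3 := norm_nonneg (P ω)
    have h4 := norm_nonneg K
    have h5 := abs_nonneg c₀
    nlinarith [mul_nonneg h5 h3, mul_nonneg h4 h3]
  have hYb : ∀ ω, |psi cp cm (c₀ + (inner ℝ (P ω) K : ℝ))| ≤
      ((|cp| + |cm|) * (|c₀| + ‖K‖)) * (1 + ‖P ω‖) := by
    intro ω
    have h1 := abs_psi_le cp cm (c₀ + (inner ℝ (P ω) K : ℝ))
    have h2 := hXb ω
    have h3 : (0:ℝ) ≤ |cp| + |cm| := by positivity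
    have h4 := abs_nonneg (c₀ + (inner ℝ (P ω) K : ℝ))
    nlinarith
  constructor
  · refine integrable_of_le_dom hdom mY.aestronglyMeasurable ((|cp| + |cm|) * (|c₀| + ‖K‖))
      fun ω => ?_
    have h1 := hYb ω
    have h2 : (0:ℝ) ≤ (|cp| + |cm|) * (|c₀| + ‖K‖) := by positivity
    have h3 := norm_nonneg (P ω)
    nlinarith [mul_nonneg (mul_nonneg h2 (by linarith : (0:ℝ) ≤ 1 + ‖P ω‖)) h3]
  · refine integrable_of_le_dom hdom (mY.pow_const 2).aestronglyMeasurable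
      (((|cp| + |cm|) * (|c₀| + ‖K‖)) ^ 2) fun ω => ?_
    rw [abs_of_nonneg (sq_nonneg _)]
    have h1 := hYb ω
    have h2 := abs_nonneg (psi cp cm (c₀ + (inner ℝ (P ω) K : ℝ)))
    nlinarith [sq_abs (psi cp cm (c₀ + (inner ℝ (P ω) K : ℝ)))]

lemma integrable_psi_pack0 {Ω : Type*} [MeasurableSpace Ω] {ℙ : Measure Ω}
    [IsProbabilityMeasure ℙ]
    {n : ℕ} {P : Ω → EuclideanSpace ℝ (Fin n)} (hmeas : Measurable P)
    (hL2 : Integrable (fun ω => ‖P ω‖ ^ 2) ℙ) (cp cm : ℝ) (K : EuclideanSpace ℝ (Fin n)) :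
    Integrable (fun ω => psi cp cm ((inner ℝ (P ω) K : ℝ))) ℙ ∧
    Integrable (fun ω => psi cp cm ((inner ℝ (P ω) K : ℝ)) ^ 2) ℙ := by
  obtain ⟨h1, h2⟩ := integrable_psi_pack hmeas hL2 cp cm 0 K
  exact ⟨h1.congr (ae_of_all _ fun ω => by simp),
    h2.congr (ae_of_all _ fun ω => by simp)⟩

lemma var_compare {Ω : Type*} [MeasurableSpace Ω] (ℙ : Measure Ω) [IsProbabilityMeasure ℙ]
    (Y Z : Ω → ℝ) (iY : Integrable Y ℙ) (iY2 : Integrable (fun ω => Y ω ^ 2) ℙ)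
    (iZ : Integrable Z ℙ) (iZ2 : Integrable (fun ω => Z ω ^ 2) ℙ)
    (iD2 : Integrable (fun ω => (Z ω - Y ω) ^ 2) ℙ) :
    (∫ ω, Z ω ^ 2 ∂ℙ) - (∫ ω, Z ω ∂ℙ) ^ 2 ≤
      2 * ((∫ ω, Y ω ^ 2 ∂ℙ) - (∫ ω, Y ω ∂ℙ) ^ 2) + 2 * ∫ ω, (Z ω - Y ω) ^ 2 ∂ℙ := by
  have iD : Integrable (fun ω => Z ω - Y ω) ℙ := iZ.sub iY
  have iDsq : Integrable (fun ω => (Z ω - Y ω) ^ 2) ℙ := iD2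
  have v1 := var_eq ℙ Y iY iY2
  have v2 := var_eq ℙ Z iZ iZ2
  have v3 := var_eq ℙ (fun ω => Z ω - Y ω) iD iD2
  have hm : (∫ ω, (Z ω - Y ω) ∂ℙ) = (∫ ω, Z ω ∂ℙ) - ∫ ω, Y ω ∂ℙ := integral_sub iZ iY
  set mY := ∫ ω, Y ω ∂ℙ
  set mZ := ∫ ω, Z ω ∂ℙ
  set mD := ∫ ω, (Z ω - Y ω) ∂ℙ
  have hpt : ∀ ω, (Z ω - mZ) ^ 2 ≤ 2 * (Y ω - mY) ^ 2 + 2 * ((Z ω - Y ω) - mD) ^ 2 := by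
    intro ω
    have hd : Z ω - mZ = (Y ω - mY) + ((Z ω - Y ω) - mD) := by rw [hm]; ring
    rw [hd]
    nlinarith [sq_nonneg ((Y ω - mY) - ((Z ω - Y ω) - mD))]
  have iL : Integrable (fun ω => (Z ω - mZ) ^ 2) ℙ := integrable_sub_sq iZ iZ2 mZ
  have iR1 : Integrable (fun ω => (Y ω - mY) ^ 2) ℙ := integrable_sub_sq iY iY2 mY
  have iR2 : Integrable (fun ω => ((Z ω - Y ω) - mD) ^ 2) ℙ := integrable_sub_sq iD iD2 mD
  have iR : Integrable (fun ω => 2 * (Y ω - mY) ^ 2 + 2 * ((Z ω - Y ω) - mD) ^ 2) ℙ :=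
    (iR1.const_mul 2).add (iR2.const_mul 2)
  have hmono : (∫ ω, (Z ω - mZ) ^ 2 ∂ℙ) ≤
      ∫ ω, (2 * (Y ω - mY) ^ 2 + 2 * ((Z ω - Y ω) - mD) ^ 2) ∂ℙ :=
    integral_mono iL iR hpt
  have hsplit : (∫ ω, (2 * (Y ω - mY) ^ 2 + 2 * ((Z ω - Y ω) - mD) ^ 2) ∂ℙ) =
      2 * (∫ ω, (Y ω - mY) ^ 2 ∂ℙ) + 2 * ∫ ω, ((Z ω - Y ω) - mD) ^ 2 ∂ℙ := by
    have a1 : (∫ ω, (2 * (Y ω - mY) ^ 2 + 2 * ((Z ω - Y ω) - mD) ^ 2) ∂ℙ) =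
        (∫ ω, 2 * (Y ω - mY) ^ 2 ∂ℙ) + ∫ ω, 2 * ((Z ω - Y ω) - mD) ^ 2 ∂ℙ :=
      integral_add (iR1.const_mul 2) (iR2.const_mul 2)
    rw [a1, integral_const_mul, integral_const_mul]
  have hD2 : (∫ ω, ((Z ω - Y ω) - mD) ^ 2 ∂ℙ) ≤ ∫ ω, (Z ω - Y ω) ^ 2 ∂ℙ := by
    rw [v3]; nlinarith [sq_nonneg mD]
  rw [v2] at hmono
  rw [hsplit, v1] at hmono
  linarith

noncomputable def gfun {Ω : Type*} [MeasurableSpace Ω] (ℙ : Measure Ω) {n : ℕ}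
    (P : Ω → EuclideanSpace ℝ (Fin n)) (cp cm : ℝ) (L : EuclideanSpace ℝ (Fin n)) : ℝ :=
  (∫ ω, psi cp cm (inner ℝ (P ω) L : ℝ) ^ 2 ∂ℙ) - (∫ ω, psi cp cm (inner ℝ (P ω) L : ℝ) ∂ℙ) ^ 2

lemma gfun_pos {Ω : Type*} [MeasurableSpace Ω] (ℙ : Measure Ω) [IsProbabilityMeasure ℙ]
    {n : ℕ} {P : Ω → EuclideanSpace ℝ (Fin n)} (hmeas : Measurable P)
    (hL2 : Integrable (fun ω => ‖P ω‖ ^ 2) ℙ) (cp cm : ℝ) (hcc : cp ≠ 0 ∨ cm ≠ 0)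
    (htwosided : ∀ L : EuclideanSpace ℝ (Fin n), L ≠ 0 →
      0 < ℙ {ω | 0 < (inner ℝ (P ω) L : ℝ)} ∧ 0 < ℙ {ω | (inner ℝ (P ω) L : ℝ) < 0})
    (hatomless : ∀ L : EuclideanSpace ℝ (Fin n), L ≠ 0 →
      ∀ c : ℝ, ℙ {ω | (inner ℝ (P ω) L : ℝ) = c} = 0)
    (L : EuclideanSpace ℝ (Fin n)) (hL : L ≠ 0) :
    0 < gfun ℙ P cp cm L := by
  obtain ⟨iF, iF2⟩ := integrable_psi_pack0 hmeas hL2 cp cm L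
  set m := ∫ ω, psi cp cm (inner ℝ (P ω) L : ℝ) ∂ℙ with hm
  have hvar : gfun ℙ P cp cm L = ∫ ω, (psi cp cm (inner ℝ (P ω) L : ℝ) - m) ^ 2 ∂ℙ :=
    (var_eq ℙ _ iF iF2).symm
  have h0 : 0 ≤ gfun ℙ P cp cm L := by
    rw [hvar]; exact integral_nonneg fun ω => sq_nonneg _
  rcases h0.lt_or_eq with h | h
  · exact h
  exfalso
  have hzero : (∫ ω, (psi cp cm (inner ℝ (P ω) L : ℝ) - m) ^ 2 ∂ℙ) = 0 := by
    rw [← hvar]; exact h.symm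
  have iFm2 : Integrable (fun ω => (psi cp cm (inner ℝ (P ω) L : ℝ) - m) ^ 2) ℙ :=
    integrable_sub_sq iF iF2 m
  have hae : (fun ω => (psi cp cm (inner ℝ (P ω) L : ℝ) - m) ^ 2) =ᵐ[ℙ] 0 :=
    (integral_eq_zero_iff_of_nonneg (fun ω => sq_nonneg _) iFm2).mp hzero
  have haem : ∀ᵐ ω ∂ℙ, psi cp cm (inner ℝ (P ω) L : ℝ) = m := by
    filter_upwards [hae] with ω hω
    have hω' : (psi cp cm (inner ℝ (P ω) L : ℝ) - m) ^ 2 = 0 := hω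
    have := pow_eq_zero_iff (n := 2) (by norm_num) |>.mp hω'
    linarith [this]
  have hcompl : ℙ {ω | ¬ psi cp cm (inner ℝ (P ω) L : ℝ) = m} = 0 := by
    rw [← ae_iff]; exact haem
  rcases hcc with hcp | hcm
  · have hS : 0 < ℙ {ω | (inner ℝ (P ω) L : ℝ) < 0} := (htwosided L hL).2
    have hsubset : {ω | (inner ℝ (P ω) L : ℝ) < 0} ⊆
        {ω | (inner ℝ (P ω) L : ℝ) = m / cp} ∪ {ω | ¬ psi cp cm (inner ℝ (P ω) L : ℝ) = m} := by
      intro ω hω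
      by_cases hf : psi cp cm (inner ℝ (P ω) L : ℝ) = m
      · left
        have hle : (inner ℝ (P ω) L : ℝ) ≤ 0 := le_of_lt hω
        have : cp * (inner ℝ (P ω) L : ℝ) = m := by rwa [psi, if_pos hle] at hf
        exact eq_div_of_mul_eq hcp (by linarith [this] : (inner ℝ (P ω) L : ℝ) * cp = m)
      · right; exact hf
    have hle : ℙ {ω | (inner ℝ (P ω) L : ℝ) < 0} ≤
        ℙ {ω | (inner ℝ (P ω) L : ℝ) = m / cp} + ℙ {ω | ¬ psi cp cm (inner ℝ (P ω) L : ℝ) = m} :=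
      le_trans (measure_mono hsubset) (measure_union_le _ _)
    rw [hatomless L hL (m / cp), hcompl, zero_add] at hle
    exact hS.ne' (le_antisymm hle zero_le)
  · have hS : 0 < ℙ {ω | 0 < (inner ℝ (P ω) L : ℝ)} := (htwosided L hL).1
    have hsubset : {ω | 0 < (inner ℝ (P ω) L : ℝ)} ⊆
        {ω | (inner ℝ (P ω) L : ℝ) = m / cm} ∪ {ω | ¬ psi cp cm (inner ℝ (P ω) L : ℝ) = m} := by
      intro ω hω
      by_cases hf : psi cp cm (inner ℝ (P ω) L : ℝ) = m
      · left
        have hlt : ¬ (inner ℝ (P ω) L : ℝ) ≤ 0 := not_le.mpr hω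
        have : cm * (inner ℝ (P ω) L : ℝ) = m := by rwa [psi, if_neg hlt] at hf
        exact eq_div_of_mul_eq hcm (by linarith [this] : (inner ℝ (P ω) L : ℝ) * cm = m)
      · right; exact hf
    have hle : ℙ {ω | 0 < (inner ℝ (P ω) L : ℝ)} ≤
        ℙ {ω | (inner ℝ (P ω) L : ℝ) = m / cm} + ℙ {ω | ¬ psi cp cm (inner ℝ (P ω) L : ℝ) = m} :=
      le_trans (measure_mono hsubset) (measure_union_le _ _)
    rw [hatomless L hL (m / cm), hcompl, zero_add] at hle
    exact hS.ne' (le_antisymm hle zero_le)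

lemma gfun_cont {Ω : Type*} [MeasurableSpace Ω] (ℙ : Measure Ω) [IsProbabilityMeasure ℙ]
    {n : ℕ} {P : Ω → EuclideanSpace ℝ (Fin n)} (hmeas : Measurable P)
    (hL2 : Integrable (fun ω => ‖P ω‖ ^ 2) ℙ) (cp cm : ℝ) :
    Continuous (gfun ℙ P cp cm) := by
  have hdom := integrable_dom hmeas hL2
  have hP1 := integrable_norm_P hmeas hL2
  set C := |cp| + |cm| with hC
  have hC0 : (0:ℝ) ≤ C := by positivity
  have hb : ∀ (L : EuclideanSpace ℝ (Fin n)) ω, |psi cp cm (inner ℝ (P ω) L : ℝ)| ≤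
      C * (‖L‖ * ‖P ω‖) := by
    intro L ω
    have h1 := abs_psi_le cp cm (inner ℝ (P ω) L : ℝ)
    have h2 : |(inner ℝ (P ω) L : ℝ)| ≤ ‖P ω‖ * ‖L‖ := abs_real_inner_le_norm _ _
    have h3 := abs_nonneg ((inner ℝ (P ω) L : ℝ))
    nlinarith
  have hmb : ∀ L : EuclideanSpace ℝ (Fin n),
      AEStronglyMeasurable (fun ω => psi cp cm (inner ℝ (P ω) L : ℝ)) ℙ := by
    intro L
    have hc : Continuous fun x : EuclideanSpace ℝ (Fin n) => (inner ℝ x L : ℝ) :=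
      continuous_id.inner continuous_const
    exact ((psi_cont cp cm).measurable.comp (hc.measurable.comp hmeas)).aestronglyMeasurable
  have hcont1 : Continuous fun L : EuclideanSpace ℝ (Fin n) =>
      ∫ ω, psi cp cm (inner ℝ (P ω) L : ℝ) ^ 2 ∂ℙ := by
    rw [continuous_iff_continuousAt]
    intro L0
    refine continuousAt_of_dominated (bound := fun ω => (C * (‖L0‖ + 1)) ^ 2 * ‖P ω‖ ^ 2)
      (Filter.Eventually.of_forall fun L => ((hmb L).pow 2)) ?_ (hL2.const_mul _) ?_
    · refine Filter.eventually_of_mem (Metric.ball_mem_nhds L0 one_pos) fun L hL => ?_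
      refine ae_of_all _ fun ω => ?_
      have hLn : ‖L‖ ≤ ‖L0‖ + 1 := by
        have h1 := norm_sub_norm_le L L0
        have h2 := mem_ball_iff_norm.mp hL
        linarith
      have h3 := hb L ω
      have h4 := norm_nonneg (P ω)
      have h5 := norm_nonneg L
      have h6 := abs_nonneg (psi cp cm (inner ℝ (P ω) L : ℝ))
      rw [Real.norm_eq_abs, abs_of_nonneg (sq_nonneg _)]
      have h7 : |psi cp cm (inner ℝ (P ω) L : ℝ)| ≤ (C * (‖L0‖ + 1)) * ‖P ω‖ := by
        nlinarith [mul_nonneg hC0 h4]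
      show psi cp cm (inner ℝ (P ω) L : ℝ) ^ 2 ≤ (C * (‖L0‖ + 1)) ^ 2 * ‖P ω‖ ^ 2
      nlinarith [sq_abs (psi cp cm (inner ℝ (P ω) L : ℝ)), mul_self_le_mul_self h6 h7]
    · refine ae_of_all _ fun ω => ContinuousAt.pow ?_ 2
      exact ((psi_cont cp cm).comp (continuous_const.inner continuous_id)).continuousAt
  have hcont2 : Continuous fun L : EuclideanSpace ℝ (Fin n) =>
      ∫ ω, psi cp cm (inner ℝ (P ω) L : ℝ) ∂ℙ := by
    rw [continuous_iff_continuousAt]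
    intro L0
    refine continuousAt_of_dominated (bound := fun ω => (C * (‖L0‖ + 1)) * ‖P ω‖)
      (Filter.Eventually.of_forall fun L => hmb L) ?_ (hP1.const_mul _) ?_
    · refine Filter.eventually_of_mem (Metric.ball_mem_nhds L0 one_pos) fun L hL => ?_
      refine ae_of_all _ fun ω => ?_
      have hLn : ‖L‖ ≤ ‖L0‖ + 1 := by
        have h1 := norm_sub_norm_le L L0
        have h2 := mem_ball_iff_norm.mp hL
        linarith
      have h3 := hb L ω
      have h4 := norm_nonneg (P ω)
      rw [Real.norm_eq_abs]
      show |psi cp cm (inner ℝ (P ω) L : ℝ)| ≤ (C * (‖L0‖ + 1)) * ‖P ω‖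
      nlinarith [mul_nonneg hC0 h4]
    · refine ae_of_all _ fun ω => ?_
      exact ((psi_cont cp cm).comp (continuous_const.inner continuous_id)).continuousAt
  exact hcont1.sub (hcont2.pow 2)

set_option maxHeartbeats 2000000 in
/-- Coercivity of `F⁻`: under the two-sidedness, directional atomlessness,
`b⁺ ≥ (a⁺)²`, `b⁻ ≥ (a⁻)²` and `(ρ'+a⁺, ρ'+a⁻) ≠ (0,0)` assumptions,
`F⁻(K) → +∞` as `‖K‖ → +∞`. -/
theorem Fminus_coercive {Ω : Type*} [MeasurableSpace Ω] (ℙ : Measure Ω)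
    [IsProbabilityMeasure ℙ] {n : ℕ} (hn : 1 ≤ n)
    (P : Ω → EuclideanSpace ℝ (Fin n)) (hmeas : Measurable P)
    (hL2 : Integrable (fun ω => ‖P ω‖ ^ 2) ℙ)
    (s ρ' γm ap am bp bm : ℝ) (hs : 0 < s) (hρ : 0 < ρ')
    (htwosided : ∀ L : EuclideanSpace ℝ (Fin n), L ≠ 0 →
      0 < ℙ {ω | 0 < (inner ℝ (P ω) L : ℝ)} ∧ 0 < ℙ {ω | (inner ℝ (P ω) L : ℝ) < 0})
    (hatomless : ∀ L : EuclideanSpace ℝ (Fin n), L ≠ 0 →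
      ∀ c : ℝ, ℙ {ω | (inner ℝ (P ω) L : ℝ) = c} = 0)
    (hbp : ap ^ 2 ≤ bp) (hbm : am ^ 2 ≤ bm)
    (hne : (ρ' + ap, ρ' + am) ≠ ((0 : ℝ), (0 : ℝ))) :
    ∀ M : ℝ, ∃ R > (0 : ℝ), ∀ K : EuclideanSpace ℝ (Fin n),
      R ≤ ‖K‖ → M ≤ Fminus ℙ P s ρ' γm ap am bp bm K := by
  intro M
  have hcc : ρ' + ap ≠ 0 ∨ ρ' + am ≠ 0 := by
    by_contra h
    push_neg at h
    exact hne (by rw [h.1, h.2])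
  have hdom := integrable_dom hmeas hL2
  have hP1 := integrable_norm_P hmeas hL2
  set C := |ρ' + ap| + |ρ' + am| with hCdef
  have hC0 : (0:ℝ) ≤ C := by positivity
  set EP := ∫ ω, ‖P ω‖ ∂ℙ with hEPdef
  have hEP0 : 0 ≤ EP := integral_nonneg fun ω => norm_nonneg _
  have hgc := gfun_cont ℙ hmeas hL2 (ρ' + ap) (ρ' + am)
  have hsne : (Metric.sphere (0 : EuclideanSpace ℝ (Fin n)) 1).Nonempty := by
    refine ⟨EuclideanSpace.single ⟨0, hn⟩ (1:ℝ), ?_⟩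
    simp [EuclideanSpace.norm_single]
  obtain ⟨L0, hL0mem, hL0min⟩ :=
    (isCompact_sphere (0 : EuclideanSpace ℝ (Fin n)) 1).exists_isMinOn hsne hgc.continuousOn
  set ε := gfun ℙ P (ρ' + ap) (ρ' + am) L0 with hεdef
  have hL0ne : L0 ≠ 0 := by
    intro h
    have h1 := mem_sphere_zero_iff_norm.mp hL0mem
    rw [h] at h1
    simp at h1
  have hεpos : 0 < ε := gfun_pos ℙ hmeas hL2 _ _ hcc htwosided hatomless L0 hL0ne
  set B := C ^ 2 * s ^ 2 + |γm| * C * s + |γm| * C * EP + |M| + 1 with hBdef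
  have hBpos : 0 < B := by positivity
  refine ⟨max 1 (2 * B / ε), lt_of_lt_of_le one_pos (le_max_left _ _), fun K hK => ?_⟩
  have ht1 : (1:ℝ) ≤ ‖K‖ := le_trans (le_max_left _ _) hK
  have ht0 : (0:ℝ) < ‖K‖ := lt_of_lt_of_le one_pos ht1
  have htB : 2 * B ≤ ε * ‖K‖ := by
    have h1 := le_trans (le_max_right _ _) hK
    rw [div_le_iff₀ hεpos] at h1
    linarith
  set L : EuclideanSpace ℝ (Fin n) := ‖K‖⁻¹ • K with hLdef
  have hLmem : L ∈ Metric.sphere (0 : EuclideanSpace ℝ (Fin n)) 1 := by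
    rw [mem_sphere_zero_iff_norm, hLdef, norm_smul, norm_inv, norm_norm,
      inv_mul_cancel₀ ht0.ne']
  have hKL : ∀ ω, (inner ℝ (P ω) K : ℝ) = ‖K‖ * (inner ℝ (P ω) L : ℝ) := by
    intro ω
    rw [hLdef, real_inner_smul_right, ← mul_assoc, mul_inv_cancel₀ ht0.ne', one_mul]
  clear_value L
  clear_value ε
  clear_value C
  clear_value EP
  clear_value B
  obtain ⟨iY, iY2⟩ := integrable_psi_pack hmeas hL2 (ρ' + ap) (ρ' + am) s K
  obtain ⟨iZ, iZ2⟩ := integrable_psi_pack0 hmeas hL2 (ρ' + ap) (ρ' + am) K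
  have hDb : ∀ ω, |psi (ρ' + ap) (ρ' + am) ((inner ℝ (P ω) K : ℝ)) -
      psi (ρ' + ap) (ρ' + am) (s + (inner ℝ (P ω) K : ℝ))| ≤ C * s := by
    intro ω
    rw [hCdef]
    exact psi_diff_le _ _ hs.le _
  have iD2 : Integrable (fun ω => (psi (ρ' + ap) (ρ' + am) ((inner ℝ (P ω) K : ℝ)) -
      psi (ρ' + ap) (ρ' + am) (s + (inner ℝ (P ω) K : ℝ))) ^ 2) ℙ := by
    refine (integrable_const ((C * s) ^ 2)).mono'
      (((iZ.aestronglyMeasurable.sub iY.aestronglyMeasurable).pow 2)) (ae_of_all _ fun ω => ?_)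
    rw [Real.norm_eq_abs, abs_of_nonneg (sq_nonneg _)]
    have h1 := hDb ω
    have h2 := abs_nonneg (psi (ρ' + ap) (ρ' + am) ((inner ℝ (P ω) K : ℝ)) -
      psi (ρ' + ap) (ρ' + am) (s + (inner ℝ (P ω) K : ℝ)))
    nlinarith [sq_abs (psi (ρ' + ap) (ρ' + am) ((inner ℝ (P ω) K : ℝ)) -
      psi (ρ' + ap) (ρ' + am) (s + (inner ℝ (P ω) K : ℝ)))]
  -- variance comparison
  have H2 : (∫ ω, psi (ρ' + ap) (ρ' + am) ((inner ℝ (P ω) K : ℝ)) ^ 2 ∂ℙ) -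
      (∫ ω, psi (ρ' + ap) (ρ' + am) ((inner ℝ (P ω) K : ℝ)) ∂ℙ) ^ 2 ≤
      2 * ((∫ ω, psi (ρ' + ap) (ρ' + am) (s + (inner ℝ (P ω) K : ℝ)) ^ 2 ∂ℙ) -
        (∫ ω, psi (ρ' + ap) (ρ' + am) (s + (inner ℝ (P ω) K : ℝ)) ∂ℙ) ^ 2) +
      2 * ∫ ω, (psi (ρ' + ap) (ρ' + am) ((inner ℝ (P ω) K : ℝ)) -
        psi (ρ' + ap) (ρ' + am) (s + (inner ℝ (P ω) K : ℝ))) ^ 2 ∂ℙ :=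
    var_compare ℙ _ _ iY iY2 iZ iZ2 iD2
  have H3 : (∫ ω, (psi (ρ' + ap) (ρ' + am) ((inner ℝ (P ω) K : ℝ)) -
      psi (ρ' + ap) (ρ' + am) (s + (inner ℝ (P ω) K : ℝ))) ^ 2 ∂ℙ) ≤ (C * s) ^ 2 := by
    have h1 : (∫ ω, (psi (ρ' + ap) (ρ' + am) ((inner ℝ (P ω) K : ℝ)) -
        psi (ρ' + ap) (ρ' + am) (s + (inner ℝ (P ω) K : ℝ))) ^ 2 ∂ℙ) ≤
        ∫ _ω, (C * s) ^ 2 ∂ℙ := by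
      refine integral_mono iD2 (integrable_const _) fun ω => ?_
      have h2 := hDb ω
      have h3 := abs_nonneg (psi (ρ' + ap) (ρ' + am) ((inner ℝ (P ω) K : ℝ)) -
        psi (ρ' + ap) (ρ' + am) (s + (inner ℝ (P ω) K : ℝ)))
      nlinarith [sq_abs (psi (ρ' + ap) (ρ' + am) ((inner ℝ (P ω) K : ℝ)) -
        psi (ρ' + ap) (ρ' + am) (s + (inner ℝ (P ω) K : ℝ)))]
    simpa [measure_univ] using h1
  -- scaling lower bound
  have eZ : (∫ ω, psi (ρ' + ap) (ρ' + am) ((inner ℝ (P ω) K : ℝ)) ∂ℙ) =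
      ‖K‖ * ∫ ω, psi (ρ' + ap) (ρ' + am) ((inner ℝ (P ω) L : ℝ)) ∂ℙ := by
    rw [← integral_const_mul]
    refine integral_congr_ae (ae_of_all _ fun ω => ?_)
    show psi (ρ' + ap) (ρ' + am) ((inner ℝ (P ω) K : ℝ)) =
      ‖K‖ * psi (ρ' + ap) (ρ' + am) ((inner ℝ (P ω) L : ℝ))
    rw [hKL ω, psi_smul _ _ ht0.le]
  have eZ2 : (∫ ω, psi (ρ' + ap) (ρ' + am) ((inner ℝ (P ω) K : ℝ)) ^ 2 ∂ℙ) =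
      ‖K‖ ^ 2 * ∫ ω, psi (ρ' + ap) (ρ' + am) ((inner ℝ (P ω) L : ℝ)) ^ 2 ∂ℙ := by
    rw [← integral_const_mul]
    refine integral_congr_ae (ae_of_all _ fun ω => ?_)
    show psi (ρ' + ap) (ρ' + am) ((inner ℝ (P ω) K : ℝ)) ^ 2 =
      ‖K‖ ^ 2 * psi (ρ' + ap) (ρ' + am) ((inner ℝ (P ω) L : ℝ)) ^ 2
    rw [hKL ω, psi_smul _ _ ht0.le]
    ring
  have hεL : ε ≤ gfun ℙ P (ρ' + ap) (ρ' + am) L := by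
    rw [hεdef]
    exact (isMinOn_iff.mp hL0min) L hLmem
  have hgL : gfun ℙ P (ρ' + ap) (ρ' + am) L =
      (∫ ω, psi (ρ' + ap) (ρ' + am) ((inner ℝ (P ω) L : ℝ)) ^ 2 ∂ℙ) -
      (∫ ω, psi (ρ' + ap) (ρ' + am) ((inner ℝ (P ω) L : ℝ)) ∂ℙ) ^ 2 := rfl
  have H1 : ε * ‖K‖ ^ 2 ≤ (∫ ω, psi (ρ' + ap) (ρ' + am) ((inner ℝ (P ω) K : ℝ)) ^ 2 ∂ℙ) -
      (∫ ω, psi (ρ' + ap) (ρ' + am) ((inner ℝ (P ω) K : ℝ)) ∂ℙ) ^ 2 := by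
    rw [eZ, eZ2]
    rw [hgL] at hεL
    set a2 := ∫ ω, psi (ρ' + ap) (ρ' + am) ((inner ℝ (P ω) L : ℝ)) ^ 2 ∂ℙ with ha2
    set a1 := ∫ ω, psi (ρ' + ap) (ρ' + am) ((inner ℝ (P ω) L : ℝ)) ∂ℙ with ha1
    clear_value a2 a1
    nlinarith [mul_le_mul_of_nonneg_left hεL (sq_nonneg ‖K‖)]
  -- expectation bound
  have hYb : ∀ ω, |psi (ρ' + ap) (ρ' + am) (s + (inner ℝ (P ω) K : ℝ))| ≤
      C * s + (C * ‖K‖) * ‖P ω‖ := by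
    intro ω
    rw [hCdef]
    have h1 := abs_psi_le (ρ' + ap) (ρ' + am) (s + (inner ℝ (P ω) K : ℝ))
    have h2 := abs_add_le s (inner ℝ (P ω) K : ℝ)
    have h3 : |(inner ℝ (P ω) K : ℝ)| ≤ ‖P ω‖ * ‖K‖ := abs_real_inner_le_norm _ _
    have h6 : |s + (inner ℝ (P ω) K : ℝ)| ≤ s + ‖P ω‖ * ‖K‖ := by
      rw [abs_of_pos hs] at h2
      linarith
    nlinarith [mul_le_mul_of_nonneg_left h6 hC0]
  have H4 : |∫ ω, psi (ρ' + ap) (ρ' + am) (s + (inner ℝ (P ω) K : ℝ)) ∂ℙ| ≤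
      C * s + (C * ‖K‖) * EP := by
    have k1 : |∫ ω, psi (ρ' + ap) (ρ' + am) (s + (inner ℝ (P ω) K : ℝ)) ∂ℙ| ≤
        ∫ ω, |psi (ρ' + ap) (ρ' + am) (s + (inner ℝ (P ω) K : ℝ))| ∂ℙ := by
      simpa [Real.norm_eq_abs] using
        norm_integral_le_integral_norm (μ := ℙ)
          (fun ω => psi (ρ' + ap) (ρ' + am) (s + (inner ℝ (P ω) K : ℝ)))
    have ibound : Integrable (fun ω => C * s + (C * ‖K‖) * ‖P ω‖) ℙ :=
      (integrable_const _).add (hP1.const_mul _)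
    have k2 : (∫ ω, |psi (ρ' + ap) (ρ' + am) (s + (inner ℝ (P ω) K : ℝ))| ∂ℙ) ≤
        ∫ ω, (C * s + (C * ‖K‖) * ‖P ω‖) ∂ℙ :=
      integral_mono iY.abs ibound hYb
    have k3 : (∫ ω, (C * s + (C * ‖K‖) * ‖P ω‖) ∂ℙ) = C * s + (C * ‖K‖) * EP := by
      rw [integral_add (integrable_const _) (hP1.const_mul _), integral_const_mul, integral_const]
      simp [measure_univ]
      rw [integral_const_mul, hEPdef]
    linarith
  -- assemble
  rw [Fminus_key ℙ P hmeas hL2 s ρ' γm ap am bp bm K]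
  have hJp : 0 ≤ ∫ ω, (s + (inner ℝ (P ω) K : ℝ)) ^ 2 *
      (if s + (inner ℝ (P ω) K : ℝ) ≤ 0 then (1:ℝ) else 0) ∂ℙ := by
    refine integral_nonneg fun ω => ?_
    refine mul_nonneg (sq_nonneg _) ?_
    split <;> norm_num
  have hJm : 0 ≤ ∫ ω, (s + (inner ℝ (P ω) K : ℝ)) ^ 2 *
      (if 0 < s + (inner ℝ (P ω) K : ℝ) then (1:ℝ) else 0) ∂ℙ := by
    refine integral_nonneg fun ω => ?_
    refine mul_nonneg (sq_nonneg _) ?_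
    split <;> norm_num
  have key2 : -( |γm| * (C * s + (C * ‖K‖) * EP)) ≤
      γm * ∫ ω, psi (ρ' + ap) (ρ' + am) (s + (inner ℝ (P ω) K : ℝ)) ∂ℙ := by
    have n1 := neg_abs_le (γm * ∫ ω, psi (ρ' + ap) (ρ' + am) (s + (inner ℝ (P ω) K : ℝ)) ∂ℙ)
    have n2 : |γm * ∫ ω, psi (ρ' + ap) (ρ' + am) (s + (inner ℝ (P ω) K : ℝ)) ∂ℙ| =
        |γm| * |∫ ω, psi (ρ' + ap) (ρ' + am) (s + (inner ℝ (P ω) K : ℝ)) ∂ℙ| := abs_mul _ _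
    have n3 := mul_le_mul_of_nonneg_left H4 (abs_nonneg γm)
    linarith
  clear hYb hDb eZ eZ2 hgL hεdef hLdef hKL hLmem iY iY2 iZ iZ2 iD2
  set EY := ∫ ω, psi (ρ' + ap) (ρ' + am) (s + (inner ℝ (P ω) K : ℝ)) ∂ℙ with hEY
  set EY2 := ∫ ω, psi (ρ' + ap) (ρ' + am) (s + (inner ℝ (P ω) K : ℝ)) ^ 2 ∂ℙ with hEY2
  set EZ := ∫ ω, psi (ρ' + ap) (ρ' + am) ((inner ℝ (P ω) K : ℝ)) ∂ℙ with hEZ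
  set EZ2 := ∫ ω, psi (ρ' + ap) (ρ' + am) ((inner ℝ (P ω) K : ℝ)) ^ 2 ∂ℙ with hEZ2
  set ED2 := ∫ ω, (psi (ρ' + ap) (ρ' + am) ((inner ℝ (P ω) K : ℝ)) -
      psi (ρ' + ap) (ρ' + am) (s + (inner ℝ (P ω) K : ℝ))) ^ 2 ∂ℙ with hED2
  set J2p := ∫ ω, (s + (inner ℝ (P ω) K : ℝ)) ^ 2 *
      (if s + (inner ℝ (P ω) K : ℝ) ≤ 0 then (1:ℝ) else 0) ∂ℙ with hJ2p
  set J2m := ∫ ω, (s + (inner ℝ (P ω) K : ℝ)) ^ 2 *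
      (if 0 < s + (inner ℝ (P ω) K : ℝ) then (1:ℝ) else 0) ∂ℙ with hJ2m
  clear_value EY EY2 EZ EZ2 ED2 J2p J2m
  have hbp' : (0:ℝ) ≤ bp - ap ^ 2 := by linarith
  have hbm' : (0:ℝ) ≤ bm - am ^ 2 := by linarith
  have p1 := mul_le_mul_of_nonneg_right htB ht0.le
  have p2 : 0 ≤ (‖K‖ - 1) * (C * s) ^ 2 :=
    mul_nonneg (by linarith) (sq_nonneg _)
  have p3 : 0 ≤ (‖K‖ - 1) * (|γm| * C * s) :=
    mul_nonneg (by linarith) (by positivity)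
  have p4 : 0 ≤ (‖K‖ - 1) * |M| := mul_nonneg (by linarith) (abs_nonneg M)
  have p5 := le_abs_self M
  have harith : M ≤ (EY2 - EY ^ 2) + γm * EY := by
    nlinarith [H1, H2, H3, key2]
  nlinarith [mul_nonneg hbp' hJp, mul_nonneg hbm' hJm, harith]
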